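/- Let (Ω,ℱ,ℙ) be a probability space, P ≪ ℙ a probability measure and Q ≪ P a probability measure with generalized entropy V(Q|P) = E_P[V(dQ/dP)] < ∞ and, moreover, E_P[V(λ·dQ/dP)] < ∞ for every λ > 0. Let U satisfy the Inada conditions. Let (k^n)_{n∈ℕ} be a sequence of random variables with each k^n ∈ L¹(Q), E_Q[k^n] ≤ 0, sup_n E_Q[|k^n|] < ∞, sup_n E_P[|U(k^n)|] < ∞, and suppose k^n converges P-almost surely to a random variable k. Then k ∈ L¹(Q), U(k) ∈ L¹(P), E_Q[k] ≤ 0, and limsup_n E_P[U(k^n)] ≤ E_P[U(k)]. -/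
import Mathlib

open MeasureTheory Filter Set

lemma tangent_line {U : ℝ → ℝ} (hUdiff : Differentiable ℝ U)
    (hUconc : StrictConcaveOn ℝ Set.univ U) (a x : ℝ) :
    U x ≤ U a + deriv U a * (x - a) := by
  rcases lt_trichotomy x a with h | h | h
  · have hs := (hUconc.concaveOn).deriv_le_slope (mem_univ x) (mem_univ a) h (hUdiff a)
    rw [slope_def_field] at hs
    have hpos : (0:ℝ) < a - x := by linarith
    have := (le_div_iff₀ hpos).mp hs
    nlinarith
  · subst h; simp
  · have hs := (hUconc.concaveOn).slope_le_deriv (mem_univ a) (mem_univ x) h (hUdiff a)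
    rw [slope_def_field] at hs
    have hpos : (0:ℝ) < x - a := by linarith
    have := (div_le_iff₀ hpos).mp hs
    nlinarith

lemma bddAbove_young {U : ℝ → ℝ} (hUdiff : Differentiable ℝ U)
    (hUconc : StrictConcaveOn ℝ Set.univ U)
    (hInada1 : Tendsto (deriv U) atBot atTop)
    (hInada2 : Tendsto (deriv U) atTop (nhds 0))
    {y : ℝ} (hy : 0 < y) :
    BddAbove (Set.range (fun x => U x - x * y)) := by
  obtain ⟨x₀, hx₀⟩ := (hInada2.eventually_lt_const hy).exists
  obtain ⟨x₂, hx₂, hx₂le⟩ := ((hInada1.eventually_gt_atTop y).and (eventually_le_atBot x₀)).exists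
  obtain ⟨Mc, hMc⟩ := (isCompact_Icc (a := x₂) (b := x₀)).bddAbove_image
    ((hUdiff.continuous.sub (continuous_id.mul continuous_const)).continuousOn)
  refine ⟨max (max (U x₀ - x₀ * y) (U x₂ - x₂ * y)) Mc, ?_⟩
  rintro v ⟨x, rfl⟩
  rcases le_or_gt x x₂ with hle | hgt
  · have ht := tangent_line hUdiff hUconc x₂ x
    have : U x - x * y ≤ U x₂ - x₂ * y := by nlinarith
    exact this.trans ((le_max_right _ _).trans (le_max_left _ _))
  · rcases le_or_gt x₀ x with hle' | hlt'
    · have ht := tangent_line hUdiff hUconc x₀ x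
      have : U x - x * y ≤ U x₀ - x₀ * y := by nlinarith
      exact this.trans ((le_max_left _ _).trans (le_max_left _ _))
    · have hx : x ∈ Icc x₂ x₀ := ⟨hgt.le, hlt'.le⟩
      exact (hMc ⟨x, hx, rfl⟩).trans (le_max_right _ _)

theorem stmt_1 {Ω : Type*} [MeasurableSpace Ω]
    (μ P Q : Measure Ω) [IsProbabilityMeasure μ] [IsProbabilityMeasure P]
    [IsProbabilityMeasure Q]
    (hPμ : P ≪ μ) (hQP : Q ≪ P)
    (U V : ℝ → ℝ)
    (hUdiff : Differentiable ℝ U)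
    (hUconc : StrictConcaveOn ℝ Set.univ U)
    (hInada1 : Tendsto (deriv U) atBot atTop)
    (hInada2 : Tendsto (deriv U) atTop (nhds 0))
    (hV : ∀ y : ℝ, 0 < y → V y = ⨆ x : ℝ, (U x - x * y))
    (hV0 : BddAbove (Set.range U) → V 0 = sSup (Set.range U))
    (hpos : ¬ BddAbove (Set.range U) → ∀ᵐ ω ∂P, 0 < Q.rnDeriv P ω)
    (hent : Integrable (fun ω => V ((Q.rnDeriv P ω).toReal)) P)
    (hentl : ∀ l : ℝ, 0 < l → Integrable (fun ω => V (l * (Q.rnDeriv P ω).toReal)) P)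
    (k : ℕ → Ω → ℝ) (hkmeas : ∀ n, Measurable (k n))
    (hkQ : ∀ n, Integrable (k n) Q)
    (hkmean : ∀ n, ∫ ω, k n ω ∂Q ≤ 0)
    (hkQbdd : ∃ C : ℝ, ∀ n, ∫ ω, |k n ω| ∂Q ≤ C)
    (hUint : ∀ n, Integrable (fun ω => U (k n ω)) P)
    (hUbdd : ∃ C : ℝ, ∀ n, ∫ ω, |U (k n ω)| ∂P ≤ C)
    (klim : Ω → ℝ) (hklimmeas : Measurable klim)
    (hconv : ∀ᵐ ω ∂P, Tendsto (fun n => k n ω) atTop (nhds (klim ω))) :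
    Integrable klim Q ∧
    Integrable (fun ω => U (klim ω)) P ∧
    (∫ ω, klim ω ∂Q) ≤ 0 ∧
    limsup (fun n => ∫ ω, U (k n ω) ∂P) atTop ≤ ∫ ω, U (klim ω) ∂P := by
  obtain ⟨C₂, hC₂⟩ := hkQbdd
  obtain ⟨C, hC⟩ := hUbdd
  set z : Ω → ℝ := fun ω => (Q.rnDeriv P ω).toReal with hzdef
  have hzmeas : Measurable z := (Measure.measurable_rnDeriv Q P).ennreal_toReal
  have hznn : ∀ ω, 0 ≤ z ω := fun ω => ENNReal.toReal_nonneg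
  have hUcont : Continuous U := hUdiff.continuous
  have hconvQ : ∀ᵐ ω ∂Q, Tendsto (fun n => k n ω) atTop (nhds (klim ω)) :=
    hconv.filter_mono hQP.ae_le
  -- Part 1 : Integrable klim Q
  have h1 : Integrable klim Q := by
    refine ⟨hklimmeas.aestronglyMeasurable, ?_⟩
    rw [hasFiniteIntegral_iff_norm]
    calc ∫⁻ ω, ENNReal.ofReal ‖klim ω‖ ∂Q
        = ∫⁻ ω, liminf (fun n => ENNReal.ofReal |k n ω|) atTop ∂Q := by
          refine lintegral_congr_ae (hconvQ.mono fun ω hω => ?_)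
          simp only [Real.norm_eq_abs]
          exact (((ENNReal.continuous_ofReal.tendsto _).comp hω.abs).liminf_eq).symm
      _ ≤ liminf (fun n => ∫⁻ ω, ENNReal.ofReal |k n ω| ∂Q) atTop :=
          lintegral_liminf_le' (fun n => ((hkmeas n).abs.ennreal_ofReal).aemeasurable)
      _ ≤ ENNReal.ofReal C₂ := by
          refine Filter.liminf_le_of_frequently_le' (Frequently.of_forall fun n => ?_)
          rw [← ofReal_integral_eq_lintegral_ofReal (hkQ n).abs
            (Eventually.of_forall fun ω => abs_nonneg _)]
          exact ENNReal.ofReal_le_ofReal (hC₂ n)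
      _ < ⊤ := ENNReal.ofReal_lt_top
  -- Part 2 : Integrable (U ∘ klim) P
  have h2 : Integrable (fun ω => U (klim ω)) P := by
    refine ⟨(hUcont.measurable.comp hklimmeas).aestronglyMeasurable, ?_⟩
    rw [hasFiniteIntegral_iff_norm]
    calc ∫⁻ ω, ENNReal.ofReal ‖U (klim ω)‖ ∂P
        = ∫⁻ ω, liminf (fun n => ENNReal.ofReal |U (k n ω)|) atTop ∂P := by
          refine lintegral_congr_ae (hconv.mono fun ω hω => ?_)
          simp only [Real.norm_eq_abs]
          exact (((ENNReal.continuous_ofReal.tendsto _).comp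
            (((hUcont.tendsto _).comp hω).abs)).liminf_eq).symm
      _ ≤ liminf (fun n => ∫⁻ ω, ENNReal.ofReal |U (k n ω)| ∂P) atTop :=
          lintegral_liminf_le'
            (fun n => (((hUcont.measurable.comp (hkmeas n)).abs).ennreal_ofReal).aemeasurable)
      _ ≤ ENNReal.ofReal C := by
          refine Filter.liminf_le_of_frequently_le' (Frequently.of_forall fun n => ?_)
          rw [← ofReal_integral_eq_lintegral_ofReal (hUint n).abs
            (Eventually.of_forall fun ω => abs_nonneg _)]
          exact ENNReal.ofReal_le_ofReal (hC n)
      _ < ⊤ := ENNReal.ofReal_lt_top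
  -- change of measure facts
  have hklimz : Integrable (fun ω => z ω * klim ω) P := by
    simpa [smul_eq_mul] using (integrable_rnDeriv_smul_iff hQP).mpr h1
  have hknz : ∀ n, Integrable (fun ω => z ω * k n ω) P := fun n => by
    simpa [smul_eq_mul] using (integrable_rnDeriv_smul_iff hQP).mpr (hkQ n)
  have hklimz_eq : ∫ ω, z ω * klim ω ∂P = ∫ ω, klim ω ∂Q := by
    simpa [smul_eq_mul] using integral_rnDeriv_smul hQP (f := klim)
  have hknz_eq : ∀ n, ∫ ω, z ω * k n ω ∂P = ∫ ω, k n ω ∂Q := fun n => by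
    simpa [smul_eq_mul] using integral_rnDeriv_smul hQP (f := k n)
  -- Young inequality, a.e.
  have hyoung : ∀ l : ℝ, 0 < l → ∀ᵐ ω ∂P, ∀ x, U x - x * (l * z ω) ≤ V (l * z ω) := by
    intro l hl
    by_cases hb : BddAbove (Set.range U)
    · refine Eventually.of_forall fun ω x => ?_
      rcases (hznn ω).lt_or_eq with hzpos | hzeq
      · rw [hV _ (mul_pos hl hzpos)]
        exact le_ciSup (bddAbove_young hUdiff hUconc hInada1 hInada2 (mul_pos hl hzpos)) x
      · rw [← hzeq, mul_zero, hV0 hb]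
        simpa using le_csSup hb ⟨x, rfl⟩
    · filter_upwards [hpos hb, Measure.rnDeriv_lt_top Q P] with ω h1' h2' x
      have hzpos : 0 < z ω := ENNReal.toReal_pos h1'.ne' h2'.ne
      rw [hV _ (mul_pos hl hzpos)]
      exact le_ciSup (bddAbove_young hUdiff hUconc hInada1 hInada2 (mul_pos hl hzpos)) x
  set u : ℕ → ℝ := fun n => ∫ ω, U (k n ω) ∂P with hudef
  set A : ℝ := ∫ ω, U (klim ω) ∂P with hAdef
  set B : ℝ := ∫ ω, klim ω ∂Q with hBdef
  have hub : ∀ n, |u n| ≤ C := fun n => by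
    refine le_trans ?_ (hC n)
    simpa [Real.norm_eq_abs] using
      norm_integral_le_integral_norm (μ := P) (fun ω => U (k n ω))
  have hkQb : ∀ n, |∫ ω, k n ω ∂Q| ≤ C₂ := fun n => by
    refine le_trans ?_ (hC₂ n)
    simpa [Real.norm_eq_abs] using norm_integral_le_integral_norm (μ := Q) (k n)
  have hu_bdd : IsBoundedUnder (· ≤ ·) atTop u :=
    isBoundedUnder_of ⟨C, fun n => (abs_le.mp (hub n)).2⟩
  have hu_cobdd : IsCoboundedUnder (· ≤ ·) atTop u :=
    (isBoundedUnder_of ⟨-C, fun n => (abs_le.mp (hub n)).1⟩ :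
      IsBoundedUnder (· ≥ ·) atTop u).isCoboundedUnder_le
  -- key estimate
  have key : ∀ l : ℝ, 0 < l → limsup u atTop ≤ A - l * B := by
    intro l hl
    have hVl : Integrable (fun ω => V (l * z ω)) P := hentl l hl
    have hgnint : ∀ n, Integrable (fun ω => U (k n ω) - l * (z ω * k n ω)) P :=
      fun n => (hUint n).sub ((hknz n).const_mul l)
    have hgint : Integrable (fun ω => U (klim ω) - l * (z ω * klim ω)) P :=
      h2.sub (hklimz.const_mul l)
    have hhnint : ∀ n,
        Integrable (fun ω => V (l * z ω) - (U (k n ω) - l * (z ω * k n ω))) P :=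
      fun n => hVl.sub (hgnint n)
    have hhint : Integrable (fun ω => V (l * z ω) - (U (klim ω) - l * (z ω * klim ω))) P :=
      hVl.sub hgint
    have hhn_nn : ∀ n, 0 ≤ᵐ[P]
        fun ω => V (l * z ω) - (U (k n ω) - l * (z ω * k n ω)) := fun n =>
      (hyoung l hl).mono fun ω hω => by
        have h' := hω (k n ω)
        have : k n ω * (l * z ω) = l * (z ω * k n ω) := by ring
        simp only [Pi.zero_apply]; linarith
    have hh_nn : 0 ≤ᵐ[P]
        fun ω => V (l * z ω) - (U (klim ω) - l * (z ω * klim ω)) :=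
      (hyoung l hl).mono fun ω hω => by
        have h' := hω (klim ω)
        have : klim ω * (l * z ω) = l * (z ω * klim ω) := by ring
        simp only [Pi.zero_apply]; linarith
    set w : ℕ → ℝ := fun n => ∫ ω, (V (l * z ω) - (U (k n ω) - l * (z ω * k n ω))) ∂P with hwdef
    set v : ℕ → ℝ := fun n => ∫ ω, (U (k n ω) - l * (z ω * k n ω)) ∂P with hvdef
    have hw_nn : ∀ n, 0 ≤ w n := fun n => integral_nonneg_of_ae (hhn_nn n)
    have hw_eq : ∀ n, w n = (∫ ω, V (l * z ω) ∂P) - v n := fun n =>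
      integral_sub hVl (hgnint n)
    have hWinf : ∫ ω, (V (l * z ω) - (U (klim ω) - l * (z ω * klim ω))) ∂P
        = (∫ ω, V (l * z ω) ∂P) - (A - l * B) := by
      rw [integral_sub hVl hgint, integral_sub h2 (hklimz.const_mul l),
        integral_const_mul, hklimz_eq]
    have hv_eq : ∀ n, v n = u n - l * ∫ ω, k n ω ∂Q := fun n => by
      rw [hvdef]
      simp only
      rw [integral_sub (hUint n) ((hknz n).const_mul l), integral_const_mul, hknz_eq n]
    -- Fatou
    have fatou : ENNReal.ofReal (∫ ω, (V (l * z ω) - (U (klim ω) - l * (z ω * klim ω))) ∂P)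
        ≤ liminf (fun n => ENNReal.ofReal (w n)) atTop := by
      rw [ofReal_integral_eq_lintegral_ofReal hhint hh_nn]
      calc ∫⁻ ω, ENNReal.ofReal (V (l * z ω) - (U (klim ω) - l * (z ω * klim ω))) ∂P
          = ∫⁻ ω, liminf (fun n =>
              ENNReal.ofReal (V (l * z ω) - (U (k n ω) - l * (z ω * k n ω)))) atTop ∂P := by
            refine lintegral_congr_ae (hconv.mono fun ω hω => ?_)
            have t1 : Tendsto (fun n => U (k n ω)) atTop (nhds (U (klim ω))) :=
              (hUcont.tendsto _).comp hω
            have t2 : Tendsto (fun n => l * (z ω * k n ω)) atTop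
                (nhds (l * (z ω * klim ω))) := (hω.const_mul (z ω)).const_mul l
            exact (((ENNReal.continuous_ofReal.tendsto _).comp
              ((t1.sub t2).const_sub (V (l * z ω)))).liminf_eq).symm
        _ ≤ liminf (fun n => ∫⁻ ω,
              ENNReal.ofReal (V (l * z ω) - (U (k n ω) - l * (z ω * k n ω))) ∂P) atTop :=
            lintegral_liminf_le' (fun n =>
              ((hhnint n).aestronglyMeasurable.aemeasurable).ennreal_ofReal)
        _ = liminf (fun n => ENNReal.ofReal (w n)) atTop := by
            refine liminf_congr (Eventually.of_forall fun n => ?_)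
            rw [ofReal_integral_eq_lintegral_ofReal (hhnint n) (hhn_nn n)]
    have hulev : ∀ n, u n ≤ v n := fun n => by
      have := mul_nonpos_of_nonneg_of_nonpos hl.le (hkmean n)
      rw [hv_eq n]; linarith
    have hv_ub : ∀ n, v n ≤ C + l * C₂ := fun n => by
      rw [hv_eq n]
      nlinarith [(abs_le.mp (hub n)).2, (abs_le.mp (hkQb n)).1]
    have hv_lb : ∀ n, -(C + l * C₂) ≤ v n := fun n => by
      rw [hv_eq n]
      nlinarith [(abs_le.mp (hub n)).1, (abs_le.mp (hkQb n)).2]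
    have hv_bdd : IsBoundedUnder (· ≤ ·) atTop v := isBoundedUnder_of ⟨C + l * C₂, hv_ub⟩
    have hv_cobdd : IsCoboundedUnder (· ≤ ·) atTop v :=
      (isBoundedUnder_of ⟨-(C + l * C₂), hv_lb⟩ :
        IsBoundedUnder (· ≥ ·) atTop v).isCoboundedUnder_le
    have hlim1 : limsup u atTop ≤ limsup v atTop :=
      limsup_le_limsup (Eventually.of_forall hulev) hu_cobdd hv_bdd
    have hlim2 : limsup v atTop ≤ A - l * B := by
      refine le_of_forall_pos_le_add fun ε hε => ?_
      set W : ℝ := ∫ ω, (V (l * z ω) - (U (klim ω) - l * (z ω * klim ω))) ∂P with hWdef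
      have hev : ∀ᶠ n in atTop, W - ε < w n := by
        rcases lt_or_ge (W - ε) 0 with hneg | hnng
        · exact Eventually.of_forall fun n => lt_of_lt_of_le hneg (hw_nn n)
        · have hWpos : 0 < W := by linarith
          have : ENNReal.ofReal (W - ε) < liminf (fun n => ENNReal.ofReal (w n)) atTop :=
            lt_of_lt_of_le ((ENNReal.ofReal_lt_ofReal_iff hWpos).mpr (by linarith)) fatou
          refine (eventually_lt_of_lt_liminf this).mono fun n hn => ?_
          exact (ENNReal.ofReal_lt_ofReal_iff_of_nonneg hnng).mp hn
      refine limsup_le_of_le hv_cobdd (hev.mono fun n hn => ?_)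
      have := hw_eq n
      have hW : W = (∫ ω, V (l * z ω) ∂P) - (A - l * B) := hWinf
      linarith
    exact hlim1.trans hlim2
  -- conclusion
  have hLlb : -C ≤ limsup u atTop :=
    le_limsup_of_frequently_le (Frequently.of_forall fun n => (abs_le.mp (hub n)).1) hu_bdd
  have hB : B ≤ 0 := by
    by_contra hBpos
    push_neg at hBpos
    have hl : (0:ℝ) < max 1 ((A + C + 1) / B) := lt_of_lt_of_le one_pos (le_max_left _ _)
    have hk := key _ hl
    have hmul : A + C + 1 ≤ max 1 ((A + C + 1) / B) * B :=
      (div_le_iff₀ hBpos).mp (le_max_right _ _)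
    linarith
  have h4 : limsup u atTop ≤ A := by
    by_contra hA
    push_neg at hA
    set L : ℝ := limsup u atTop with hLdef
    have hden : (0:ℝ) < 2 * (1 - B) := by linarith
    set l : ℝ := (L - A) / (2 * (1 - B)) with hldef
    have hl : 0 < l := div_pos (by linarith) hden
    have hk := key l hl
    have hcancel : l * (2 * (1 - B)) = L - A := div_mul_cancel₀ _ (ne_of_gt hden)
    nlinarith
  exact ⟨h1, h2, hB, h4⟩
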